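/- Soundness and completeness of the productivity transformation with respect to the greatest complete Herbrand model: for every logic program P and (possibly infinite) ground atom A, A ∈ M_P^co if and only if there exists a (possibly infinite) proof term π with A⟨π⟩ ∈ M_{P^}^co, assuming M_P^co = T_P ↓ ω and M_{P^}^co = T_{P^} ↓ ω. -/

import Mathlib

structure GroundClause (α : Type*) where
  head : α
  body : List α

def Tp {α : Type*} (P : Set (GroundClause α)) (S : Set α) : Set α :=
  {a | ∃ c ∈ P, c.head = a ∧ ∀ b ∈ c.body, b ∈ S}

/-- The greatest complete Herbrand model `M_P^co`: the greatest (post-)fixed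
point of `T_P` on the complete Herbrand base, which exists by Knaster–Tarski. -/
def McoP {α : Type*} (P : Set (GroundClause α)) : Set α :=
  sSup {S | S ⊆ Tp P S}

def PTPF (ι : Type) : PFunctor := ⟨ι × ℕ, fun p => Fin p.2⟩

/-- Possibly infinite ground proof terms, modeled coinductively. -/
def PTmInf (ι : Type) : Type := (PTPF ι).M

def PTmInf.node {ι : Type} (i : ι) (l : List (PTmInf ι)) : PTmInf ι :=
  PFunctor.M.mk ⟨(i, l.length), fun k => l.get k⟩

def transfInf {α : Type*} {ι : Type} (P : ι → Set (GroundClause α)) :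
    Set (GroundClause (α × PTmInf ι)) :=
  {d | ∃ (i : ι) (c : GroundClause α) (πs : List (PTmInf ι)),
        c ∈ P i ∧ πs.length = c.body.length ∧
        d.head = (c.head, PTmInf.node i πs) ∧ d.body = c.body.zip πs}

/- ### Auxiliary lemmas -/

theorem Tp_mono {α : Type*} {P : Set (GroundClause α)} {S T : Set α} (h : S ⊆ T) :
    Tp P S ⊆ Tp P T := by
  rintro a ⟨c, hc, hh, hb⟩
  exact ⟨c, hc, hh, fun b hb' => h (hb b hb')⟩

theorem mem_McoP_of_postfixed {α : Type*} {P : Set (GroundClause α)} {S : Set α}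
    (hS : S ⊆ Tp P S) {a : α} (ha : a ∈ S) : a ∈ McoP P := by
  rw [McoP, Set.sSup_eq_sUnion]
  exact ⟨S, hS, ha⟩

theorem McoP_subset_Tp {α : Type*} (P : Set (GroundClause α)) :
    McoP P ⊆ Tp P (McoP P) := by
  intro a ha
  rw [McoP, Set.sSup_eq_sUnion] at ha
  obtain ⟨S, hS, haS⟩ := ha
  exact Tp_mono (fun x hx => mem_McoP_of_postfixed hS hx) (hS haS)

theorem node_ofFn {ι : Type} (i : ι) (n : ℕ) (f : Fin n → PTmInf ι) :
    PTmInf.node i (List.ofFn f) = PFunctor.M.mk ⟨(i, n), f⟩ := by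
  unfold PTmInf.node
  have hlen : (List.ofFn f).length = n := List.length_ofFn
  congr 1
  refine Sigma.ext (by show ((i, (List.ofFn f).length) : ι × ℕ) = (i, n); rw [hlen]) ?_
  refine (Fin.heq_fun_iff (by simp [hlen, PTPF])).mpr ?_
  intro k
  simp [List.get_ofFn]
  rfl

noncomputable def buildTm {α : Type*} {ι : Type} (P : ι → Set (GroundClause α)) :
    {a // a ∈ McoP (⋃ i, P i)} → PTmInf ι :=
  PFunctor.M.corec (fun x =>
    let h := McoP_subset_Tp (⋃ i, P i) x.2
    let c := h.choose
    let hc := h.choose_spec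
    let i := (Set.mem_iUnion.mp hc.1).choose
    (⟨(i, c.body.length), fun k : Fin c.body.length =>
        ⟨c.body.get k, hc.2.2 _ (c.body.get_mem k)⟩⟩ :
      (PTPF ι).Obj {a // a ∈ McoP (⋃ i, P i)}))

theorem buildTm_eq {α : Type*} {ι : Type} (P : ι → Set (GroundClause α))
    (x : {a // a ∈ McoP (⋃ i, P i)}) :
    buildTm P x =
      PFunctor.M.mk ⟨((Set.mem_iUnion.mp (McoP_subset_Tp (⋃ i, P i) x.2).choose_spec.1).choose,
          (McoP_subset_Tp (⋃ i, P i) x.2).choose.body.length),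
        fun k : Fin (McoP_subset_Tp (⋃ i, P i) x.2).choose.body.length =>
          buildTm P ⟨(McoP_subset_Tp (⋃ i, P i) x.2).choose.body.get k,
          (McoP_subset_Tp (⋃ i, P i) x.2).choose_spec.2.2 _
            ((McoP_subset_Tp (⋃ i, P i) x.2).choose.body.get_mem k)⟩⟩ := by
  exact PFunctor.M.corec_def _ _

/-- soundness and completeness of the productivity transformation
w.r.t. the greatest complete Herbrand model: assuming `M_P^co = T_P ↓ ω` and
`M_{P^}^co = T_{P^} ↓ ω`, a (possibly infinite) ground atom `A` is in `M_P^co`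
iff there is a (possibly infinite) proof term `π` with `A⟨π⟩ ∈ M_{P^}^co`. -/
theorem transf_greatest_model_iff {α : Type*} {ι : Type}
    (P : ι → Set (GroundClause α))
    (h1 : McoP (⋃ i, P i) = ⋂ n : ℕ, (Tp (⋃ i, P i))^[n] Set.univ)
    (h2 : McoP (transfInf P) = ⋂ n : ℕ, (Tp (transfInf P))^[n] Set.univ)
    (A : α) :
    A ∈ McoP (⋃ i, P i) ↔ ∃ π : PTmInf ι, (A, π) ∈ McoP (transfInf P) := by
  constructor
  · -- soundness: build a proof term by corecursion
    intro hA
    set S : Set (α × PTmInf ι) :=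
      {p | ∃ h : p.1 ∈ McoP (⋃ i, P i), p.2 = buildTm P ⟨p.1, h⟩} with hSdef
    have hpost : S ⊆ Tp (transfInf P) S := by
      rintro ⟨a, π⟩ ⟨ha, hπ⟩
      set h := McoP_subset_Tp (⋃ i, P i) ha with hh
      set c := h.choose with hcdef
      have hc := h.choose_spec
      set i := (Set.mem_iUnion.mp hc.1).choose with hidef
      have hiP : c ∈ P i := (Set.mem_iUnion.mp hc.1).choose_spec
      set πs : List (PTmInf ι) :=
        List.ofFn (fun k : Fin c.body.length =>
          buildTm P ⟨c.body.get k, hc.2.2 _ (c.body.get_mem k)⟩) with hπsdef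
      have hπslen : πs.length = c.body.length := by simp [hπsdef]
      have hπeq : π = PTmInf.node i πs := by
        rw [hπsdef, node_ofFn]
        exact hπ.trans (buildTm_eq P ⟨a, ha⟩)
      refine ⟨⟨(a, π), c.body.zip πs⟩, ⟨i, c, πs, hiP, hπslen, ?_, rfl⟩, rfl, ?_⟩
      · simp only [Prod.mk.injEq]
        exact ⟨hc.2.1.symm, hπeq⟩
      · rintro ⟨b, τ⟩ hbτ
        obtain ⟨k, hk, hkeq⟩ := List.mem_iff_getElem.mp hbτ
        have hklt : k < c.body.length := by
          simp only [List.length_zip, hπslen, min_self] at hk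
          exact hk
        have hkπ : k < πs.length := by omega
        have hzip : (c.body.zip πs)[k] = (c.body[k], πs[k]) := List.getElem_zip
        rw [hzip] at hkeq
        have hb : c.body[k] = b := congrArg Prod.fst hkeq
        have hτ : πs[k] = τ := congrArg Prod.snd hkeq
        have hbM : b ∈ McoP (⋃ i, P i) := by
          rw [← hb]; exact hc.2.2 _ (List.getElem_mem hklt)
        refine ⟨hbM, ?_⟩
        show τ = buildTm P ⟨b, hbM⟩
        rw [← hτ]
        simp only [hπsdef, List.getElem_ofFn]
        exact congrArg (buildTm P) (Subtype.ext (by simpa using hb))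
    exact ⟨buildTm P ⟨A, hA⟩, mem_McoP_of_postfixed hpost ⟨hA, rfl⟩⟩
  · -- completeness: project away the proof term
    rintro ⟨π, hπ⟩
    set S : Set α := {a | ∃ τ : PTmInf ι, (a, τ) ∈ McoP (transfInf P)} with hSdef
    have hpost : S ⊆ Tp (⋃ i, P i) S := by
      rintro a ⟨τ, hτ⟩
      obtain ⟨d, hd, hdh, hdb⟩ := McoP_subset_Tp (transfInf P) hτ
      obtain ⟨i, c, πs, hiP, hlen, hhead, hbody⟩ := hd
      have hca : c.head = a := by
        have := hhead.symm.trans hdh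
        exact (Prod.ext_iff.mp this).1
      refine ⟨c, Set.mem_iUnion.mpr ⟨i, hiP⟩, hca, ?_⟩
      intro b hb
      obtain ⟨k, hk, hkeq⟩ := List.mem_iff_getElem.mp hb
      have hkπ : k < πs.length := by omega
      have hmem : (b, πs[k]) ∈ d.body := by
        rw [hbody]
        refine List.mem_iff_getElem.mpr ⟨k, by simp [List.length_zip]; omega, ?_⟩
        simp [List.getElem_zip, hkeq]
      exact ⟨πs[k], hdb _ hmem⟩
    exact mem_McoP_of_postfixed hpost ⟨π, hπ⟩
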